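/- Let S be a Tribonacci representation set with 3 ∈ S, let n = ∑_{i∈S} T(i) (a first-column entry of the Trithoff array), and let w = ∑_{i∈S} T(i−1) (the wall term of its row). Then out(w) = n + 1; that is, a wall term w is followed in its row by out(w) − 1. -/

import Mathlib

/-- The Tribonacci sequence: T(0)=0, T(1)=0, T(2)=1,
    T(n+3) = T(n+2) + T(n+1) + T(n). -/
def trib : ℕ → ℕ
  | 0 => 0
  | 1 => 0
  | 2 => 1
  | n + 3 => trib (n + 2) + trib (n + 1) + trib n

/-- A Tribonacci representation set: a finite set of naturals, all at least 3,
    containing no three consecutive integers. -/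
def IsTribRep (S : Finset ℕ) : Prop :=
  (∀ i ∈ S, 3 ≤ i) ∧ ∀ i : ℕ, ¬(i ∈ S ∧ i + 1 ∈ S ∧ i + 2 ∈ S)

lemma trib_add_three (m : ℕ) : trib (m + 3) = trib (m + 2) + trib (m + 1) + trib m := rfl

lemma trib_mono : Monotone trib := by
  apply monotone_nat_of_le_succ
  intro n
  match n with
  | 0 => simp [trib]
  | 1 => simp [trib]
  | 2 => simp [trib]
  | n + 3 =>
    have h : trib (n + 1 + 3) = trib (n + 3) + trib (n + 2) + trib (n + 1) := trib_add_three _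
    have h2 : n + 3 + 1 = n + 1 + 3 := by omega
    rw [h2, h]; omega

lemma trib_pos {n : ℕ} (h : 3 ≤ n) : 1 ≤ trib n := by
  have := trib_mono h
  simpa [show trib 3 = 1 from rfl] using this

lemma IsTribRep.subset {A B : Finset ℕ} (h : IsTribRep A) (hBA : B ⊆ A) : IsTribRep B :=
  ⟨fun i hi => h.1 i (hBA hi), fun i hi => h.2 i ⟨hBA hi.1, hBA hi.2.1, hBA hi.2.2⟩⟩

lemma sum_trib_lt : ∀ m : ℕ, ∀ C : Finset ℕ, IsTribRep C → (∀ i ∈ C, i ≤ m + 2) →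
    ∑ i ∈ C, trib i < trib (m + 3) := by
  intro m
  induction m using Nat.strong_induction_on with
  | _ m ih =>
    intro C hC hm
    by_cases h2 : m + 2 ∈ C
    · by_cases h1 : m + 1 ∈ C
      · have hm0 : m ∉ C := fun h => hC.2 m ⟨h, h1, h2⟩
        have h1' : m + 1 ∈ C.erase (m + 2) := Finset.mem_erase.mpr ⟨by omega, h1⟩
        rw [← Finset.add_sum_erase _ _ h2, ← Finset.add_sum_erase _ _ h1']
        have hsub : (C.erase (m + 2)).erase (m + 1) ⊆ C :=
          (Finset.erase_subset _ _).trans (Finset.erase_subset _ _)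
        have hC'rep : IsTribRep ((C.erase (m + 2)).erase (m + 1)) := hC.subset hsub
        have hC'le : ∀ i ∈ (C.erase (m + 2)).erase (m + 1), i ≤ m - 1 := by
          intro i hi
          have h3 := hC.1 i (hsub hi)
          have h4 := hm i (hsub hi)
          have h5 : i ≠ m + 1 := (Finset.mem_erase.mp hi).1
          have h6 : i ≠ m + 2 := (Finset.mem_erase.mp (Finset.mem_erase.mp hi).2).1
          have h7 : i ≠ m := fun h => hm0 (h ▸ hsub hi)
          omega
        by_cases hm3 : 3 ≤ m
        · have hlt : ∑ i ∈ (C.erase (m + 2)).erase (m + 1), trib i < trib (m - 3 + 3) :=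
            ih (m - 3) (by omega) _ hC'rep (by intro i hi; have := hC'le i hi; omega)
          have hrec : trib (m + 3) = trib (m + 2) + trib (m + 1) + trib m := trib_add_three m
          have he : trib (m - 3 + 3) = trib m := by congr 1; omega
          omega
        · have hm2 : m = 2 := by have := hC.1 _ h1; omega
          subst hm2
          have hemp : (C.erase 4).erase 3 = ∅ := by
            ext i; simp only [Finset.notMem_empty, iff_false]
            intro hi
            have := hC.1 i (hsub hi); have := hC'le i hi; omega
          rw [hemp]
          simp [show trib 4 = 2 from rfl, show trib 3 = 1 from rfl, show trib 5 = 4 from rfl]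
      · rw [← Finset.add_sum_erase _ _ h2]
        have hsub : C.erase (m + 2) ⊆ C := Finset.erase_subset _ _
        have hC'rep : IsTribRep (C.erase (m + 2)) := hC.subset hsub
        have hC'le : ∀ i ∈ C.erase (m + 2), i ≤ m := by
          intro i hi
          have h3 := hm i (hsub hi)
          have h5 : i ≠ m + 2 := (Finset.mem_erase.mp hi).1
          have h7 : i ≠ m + 1 := fun h => h1 (h ▸ hsub hi)
          omega
        by_cases hm2 : 2 ≤ m
        · have hlt : ∑ i ∈ C.erase (m + 2), trib i < trib (m - 2 + 3) :=
            ih (m - 2) (by omega) _ hC'rep (by intro i hi; have := hC'le i hi; omega)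
          have hrec : trib (m + 3) = trib (m + 2) + trib (m + 1) + trib m := trib_add_three m
          have he : trib (m - 2 + 3) = trib (m + 1) := by congr 1; omega
          omega
        · have hm1 : m = 1 := by have := hC.1 _ h2; omega
          subst hm1
          have hemp : C.erase 3 = ∅ := by
            ext i; simp only [Finset.notMem_empty, iff_false]
            intro hi
            have := hC.1 i (hsub hi); have := hC'le i hi; omega
          rw [hemp]
          simp [show trib 3 = 1 from rfl, show trib 4 = 2 from rfl]
    · have hle : ∀ i ∈ C, i ≤ m + 1 := by
        intro i hi
        have h4 := hm i hi
        have h5 : i ≠ m + 2 := fun h => h2 (h ▸ hi)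
        omega
      by_cases hm1 : 1 ≤ m
      · have hlt : ∑ i ∈ C, trib i < trib (m - 1 + 3) :=
          ih (m - 1) (by omega) C hC (by intro i hi; have := hle i hi; omega)
        have he : trib (m - 1 + 3) = trib (m + 2) := by congr 1; omega
        have hmono : trib (m + 2) ≤ trib (m + 3) := trib_mono (by omega)
        omega
      · have hm0 : m = 0 := by omega
        subst hm0
        have hemp : C = ∅ := by
          ext i; simp only [Finset.notMem_empty, iff_false]
          intro hi
          have := hC.1 i hi
          have h5 : i ≠ 2 := by
            rintro rfl
            exact h2 (by simpa using hi)
          have := hle i hi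
          omega
        rw [hemp]
        simp [show trib 3 = 1 from rfl]

lemma max'_le_max' {A B : Finset ℕ} (hA : IsTribRep A) (hB : IsTribRep B)
    (hAne : A.Nonempty) (hBne : B.Nonempty)
    (hsum : ∑ i ∈ A, trib i = ∑ i ∈ B, trib i) :
    B.max' hBne ≤ A.max' hAne := by
  by_contra h
  push_neg at h
  set b := B.max' hBne
  have hb3 : 3 ≤ b := hB.1 _ (B.max'_mem hBne)
  have hAlt : ∑ i ∈ A, trib i < trib (b - 3 + 3) := by
    apply sum_trib_lt (b - 3) A hA
    intro i hi
    have := A.le_max' i hi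
    omega
  have he : trib (b - 3 + 3) = trib b := by congr 1; omega
  have h2 : trib b ≤ ∑ i ∈ B, trib i :=
    Finset.single_le_sum (fun _ _ => Nat.zero_le _) (B.max'_mem hBne)
  omega

lemma trib_rep_unique : ∀ n : ℕ, ∀ A B : Finset ℕ, A.card = n → IsTribRep A → IsTribRep B →
    ∑ i ∈ A, trib i = ∑ i ∈ B, trib i → A = B := by
  intro n
  induction n with
  | zero =>
    intro A B hcard hA hB hsum
    have hA0 : A = ∅ := Finset.card_eq_zero.mp hcard
    subst hA0
    simp only [Finset.sum_empty] at hsum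
    rcases Finset.eq_empty_or_nonempty B with h' | h'
    · exact h'.symm
    · exfalso
      obtain ⟨b, hb⟩ := h'
      have h1 : 1 ≤ trib b := trib_pos (hB.1 b hb)
      have h2 : trib b ≤ ∑ i ∈ B, trib i :=
        Finset.single_le_sum (fun _ _ => Nat.zero_le _) hb
      omega
  | succ n ih =>
    intro A B hcard hA hB hsum
    have hAne : A.Nonempty := Finset.card_pos.mp (by omega)
    have hBne : B.Nonempty := by
      rcases Finset.eq_empty_or_nonempty B with h' | h'
      · exfalso
        subst h'
        simp only [Finset.sum_empty] at hsum
        obtain ⟨a, ha⟩ := hAne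
        have h1 : 1 ≤ trib a := trib_pos (hA.1 a ha)
        have h2 : trib a ≤ ∑ i ∈ A, trib i :=
          Finset.single_le_sum (fun _ _ => Nat.zero_le _) ha
        omega
      · exact h'
    have hab : A.max' hAne = B.max' hBne :=
      le_antisymm (max'_le_max' hB hA hBne hAne hsum.symm)
        (max'_le_max' hA hB hAne hBne hsum)
    set a := A.max' hAne with hadef
    have haA : a ∈ A := A.max'_mem hAne
    have haB : a ∈ B := hab ▸ B.max'_mem hBne
    have hsA : trib a + ∑ i ∈ A.erase a, trib i = ∑ i ∈ A, trib i :=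
      Finset.add_sum_erase _ _ haA
    have hsB : trib a + ∑ i ∈ B.erase a, trib i = ∑ i ∈ B, trib i :=
      Finset.add_sum_erase _ _ haB
    have hsum' : ∑ i ∈ A.erase a, trib i = ∑ i ∈ B.erase a, trib i := by omega
    have hcard' : (A.erase a).card = n := by
      rw [Finset.card_erase_of_mem haA]; omega
    have heq : A.erase a = B.erase a :=
      ih _ _ hcard' (hA.subset (Finset.erase_subset _ _))
        (hB.subset (Finset.erase_subset _ _)) hsum'
    have hins : insert a (A.erase a) = insert a (B.erase a) := by rw [heq]
    rwa [Finset.insert_erase haA, Finset.insert_erase haB] at hins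

/-- The carry cascade: adding a token T(j) below a representation set produces
    a representation set, preserving both the value and the shifted value. -/
lemma cascade : ∀ n : ℕ, ∀ s : Finset ℕ, ∀ j : ℕ, s.card = n → IsTribRep s → 3 ≤ j →
    (∀ i ∈ s, j < i) →
    ∃ B : Finset ℕ, IsTribRep B ∧
      ∑ i ∈ B, trib i = trib j + ∑ i ∈ s, trib i ∧
      ∑ i ∈ B, trib (i + 1) = trib (j + 1) + ∑ i ∈ s, trib (i + 1) := by
  intro n
  induction n using Nat.strong_induction_on with
  | _ n ih =>
    intro s j hcard hs hj hgt
    by_cases hc : j + 1 ∈ s ∧ j + 2 ∈ s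
    · obtain ⟨h1, h2⟩ := hc
      have h2' : j + 2 ∈ s.erase (j + 1) := Finset.mem_erase.mpr ⟨by omega, h2⟩
      have hsub : (s.erase (j + 1)).erase (j + 2) ⊆ s := by
        intro x hx
        exact (Finset.erase_subset _ _) ((Finset.erase_subset _ _) hx)
      have hs'rep : IsTribRep ((s.erase (j + 1)).erase (j + 2)) := hs.subset hsub
      have hcard' : ((s.erase (j + 1)).erase (j + 2)).card = n - 2 := by
        rw [Finset.card_erase_of_mem h2', Finset.card_erase_of_mem h1, hcard]
        omega
      have hn2 : 2 ≤ n := by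
        have hp : 1 ≤ (s.erase (j + 1)).card := Finset.card_pos.mpr ⟨_, h2'⟩
        rw [Finset.card_erase_of_mem h1, hcard] at hp
        omega
      have hnot3 : j + 3 ∉ s := by
        intro h
        exact hs.2 (j + 1) ⟨h1, h2, by rwa [show j + 1 + 2 = j + 3 from by omega]⟩
      have hgt' : ∀ i ∈ (s.erase (j + 1)).erase (j + 2), j + 3 < i := by
        intro i hi
        have hgi := hgt i (hsub hi)
        have hne1 : i ≠ j + 1 := (Finset.mem_erase.mp (Finset.mem_erase.mp hi).2).1
        have hne2 : i ≠ j + 2 := (Finset.mem_erase.mp hi).1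
        have hne3 : i ≠ j + 3 := fun h => hnot3 (h ▸ hsub hi)
        omega
      obtain ⟨B, hBrep, hB1, hB2⟩ :=
        ih (n - 2) (by omega) ((s.erase (j + 1)).erase (j + 2)) (j + 3) hcard' hs'rep
          (by omega) hgt'
      have hsum_s : ∑ i ∈ s, trib i =
          trib (j + 1) + (trib (j + 2) + ∑ i ∈ (s.erase (j + 1)).erase (j + 2), trib i) := by
        rw [Finset.add_sum_erase _ _ h2', Finset.add_sum_erase _ _ h1]
      have hsum_s2 : ∑ i ∈ s, trib (i + 1) =
          trib (j + 1 + 1) + (trib (j + 2 + 1) +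
            ∑ i ∈ (s.erase (j + 1)).erase (j + 2), trib (i + 1)) := by
        rw [Finset.add_sum_erase _ (fun i => trib (i + 1)) h2',
          Finset.add_sum_erase _ (fun i => trib (i + 1)) h1]
      refine ⟨B, hBrep, ?_, ?_⟩
      · rw [hB1, hsum_s]
        have hrec : trib (j + 3) = trib (j + 2) + trib (j + 1) + trib j := trib_add_three j
        omega
      · rw [hB2, hsum_s2]
        have hrec : trib (j + 1 + 3) = trib (j + 1 + 2) + trib (j + 1 + 1) + trib (j + 1) :=
          trib_add_three (j + 1)
        have e1 : trib (j + 1 + 3) = trib (j + 3 + 1) := rfl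
        have e2 : trib (j + 1 + 2) = trib (j + 2 + 1) := rfl
        omega
    · push_neg at hc
      have hjs : j ∉ s := fun h => absurd (hgt j h) (by omega)
      refine ⟨insert j s, ?_, ?_, ?_⟩
      · constructor
        · intro i hi
          rcases Finset.mem_insert.mp hi with rfl | hi
          · exact hj
          · exact hs.1 i hi
        · rintro i ⟨ha, hb, hcc⟩
          rcases Finset.mem_insert.mp ha with rfl | ha
          · rcases Finset.mem_insert.mp hb with h | hb'
            · omega
            · rcases Finset.mem_insert.mp hcc with h | hcc'
              · omega
              · exact hc hb' hcc'
          · have hia := hgt i ha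
            rcases Finset.mem_insert.mp hb with h | hb'
            · omega
            · rcases Finset.mem_insert.mp hcc with h | hcc'
              · omega
              · exact hs.2 i ⟨ha, hb', hcc'⟩
      · rw [Finset.sum_insert hjs]
      · rw [Finset.sum_insert hjs]

/-- Construction of the canonical representation of the wall term, together
    with its shifted value. -/
lemma exists_wall_rep (S : Finset ℕ) (hS : IsTribRep S) (h3 : 3 ∈ S) :
    ∃ B : Finset ℕ, IsTribRep B ∧
      ∑ i ∈ B, trib i = ∑ i ∈ S, trib (i - 1) ∧
      ∑ i ∈ B, trib (i + 1) = (∑ i ∈ S, trib i) + 1 := by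
  classical
  set s : Finset ℕ := (S.erase 3).image (fun i => i - 1) with hsdef
  have hmem : ∀ i : ℕ, i ∈ s ↔ i + 1 ∈ S.erase 3 := by
    intro i
    constructor
    · intro hi
      rw [hsdef, Finset.mem_image] at hi
      obtain ⟨k, hk, hki⟩ := hi
      have hk3 : 3 ≤ k := hS.1 k (Finset.mem_of_mem_erase hk)
      have hkne : k ≠ 3 := (Finset.mem_erase.mp hk).1
      have : k = i + 1 := by omega
      rwa [← this]
    · intro hi
      rw [hsdef, Finset.mem_image]
      exact ⟨i + 1, hi, by omega⟩
  have hsrep : IsTribRep s := by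
    constructor
    · intro i hi
      have := (hmem i).mp hi
      have h1 := hS.1 (i + 1) (Finset.mem_of_mem_erase this)
      have h2 := (Finset.mem_erase.mp this).1
      omega
    · rintro i ⟨ha, hb, hcc⟩
      have ha' := Finset.mem_of_mem_erase ((hmem i).mp ha)
      have hb' := Finset.mem_of_mem_erase ((hmem (i + 1)).mp hb)
      have hcc' := Finset.mem_of_mem_erase ((hmem (i + 2)).mp hcc)
      exact hS.2 (i + 1) ⟨ha', hb', by rwa [show i + 1 + 2 = i + 2 + 1 from by omega]⟩
  have hinj : ∀ x ∈ S.erase 3, ∀ y ∈ S.erase 3, x - 1 = y - 1 → x = y := by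
    intro x hx y hy hxy
    have := hS.1 x (Finset.mem_of_mem_erase hx)
    have := hS.1 y (Finset.mem_of_mem_erase hy)
    omega
  have hsum1 : ∑ i ∈ s, trib i = ∑ i ∈ S.erase 3, trib (i - 1) := by
    rw [hsdef, Finset.sum_image hinj]
  have hsum2 : ∑ i ∈ s, trib (i + 1) = ∑ i ∈ S.erase 3, trib i := by
    rw [hsdef, Finset.sum_image hinj]
    apply Finset.sum_congr rfl
    intro i hi
    have := hS.1 i (Finset.mem_of_mem_erase hi)
    congr 1
    omega
  have hS1 : trib (3 - 1) + ∑ i ∈ S.erase 3, trib (i - 1) = ∑ i ∈ S, trib (i - 1) :=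
    Finset.add_sum_erase _ (fun i => trib (i - 1)) h3
  have hS2 : trib 3 + ∑ i ∈ S.erase 3, trib i = ∑ i ∈ S, trib i :=
    Finset.add_sum_erase _ trib h3
  by_cases h4 : 4 ∈ S
  · -- 3 ∈ s, erase it and start the cascade at 4
    have h3s : 3 ∈ s := (hmem 3).mpr (Finset.mem_erase.mpr ⟨by omega, h4⟩)
    have h5 : 5 ∉ S := fun h => hS.2 3 ⟨h3, h4, h⟩
    have hgt : ∀ i ∈ s.erase 3, 4 < i := by
      intro i hi
      have hine := (Finset.mem_erase.mp hi).1
      have his := (hmem i).mp (Finset.mem_of_mem_erase hi)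
      have h1 := hS.1 (i + 1) (Finset.mem_of_mem_erase his)
      have h2 := (Finset.mem_erase.mp his).1
      have hi1 : i + 1 ∈ S := Finset.mem_of_mem_erase his
      have : i ≠ 4 := by
        rintro rfl
        exact h5 (by simpa using hi1)
      omega
    obtain ⟨B, hBrep, hB1, hB2⟩ :=
      cascade (s.erase 3).card (s.erase 3) 4 rfl (hsrep.subset (Finset.erase_subset _ _))
        (by omega) hgt
    have he1 : trib 3 + ∑ i ∈ s.erase 3, trib i = ∑ i ∈ s, trib i :=
      Finset.add_sum_erase _ trib h3s
    have he2 : trib (3 + 1) + ∑ i ∈ s.erase 3, trib (i + 1) = ∑ i ∈ s, trib (i + 1) :=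
      Finset.add_sum_erase _ (fun i => trib (i + 1)) h3s
    refine ⟨B, hBrep, ?_, ?_⟩
    · have e2 : trib 2 = 1 := rfl
      have e3 : trib 3 = 1 := rfl
      have e4 : trib 4 = 2 := rfl
      have e32 : trib (3 - 1) = trib 2 := rfl
      omega
    · have e3 : trib 3 = 1 := rfl
      have e4 : trib 4 = 2 := rfl
      have e5 : trib 5 = 4 := rfl
      have e41 : trib (4 + 1) = trib 5 := rfl
      have e31 : trib (3 + 1) = trib 4 := rfl
      omega
  · -- 3 ∉ s, start the cascade at 3
    have hgt : ∀ i ∈ s, 3 < i := by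
      intro i hi
      have his := (hmem i).mp hi
      have h1 := hS.1 (i + 1) (Finset.mem_of_mem_erase his)
      have h2 := (Finset.mem_erase.mp his).1
      have : i + 1 ≠ 4 := fun h => h4 (h ▸ Finset.mem_of_mem_erase his)
      omega
    obtain ⟨B, hBrep, hB1, hB2⟩ := cascade s.card s 3 rfl hsrep (by omega) hgt
    refine ⟨B, hBrep, ?_, ?_⟩
    · have e2 : trib 2 = 1 := rfl
      have e3 : trib 3 = 1 := rfl
      have e32 : trib (3 - 1) = trib 2 := rfl
      omega
    · have e3 : trib 3 = 1 := rfl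
      have e4 : trib 4 = 2 := rfl
      have e31 : trib (3 + 1) = trib 4 := rfl
      omega

/-- A wall term `w = ∑_{i∈S} T(i−1)` of a row of the Trithoff array whose
    first-column entry is `n = ∑_{i∈S} T(i)` satisfies `out(w) = n + 1`;
    that is, the wall term `w` is followed by `out(w) − 1`. -/
theorem wall_followed_by_out_sub_one (S : Finset ℕ) (hS : IsTribRep S) (h3 : 3 ∈ S)
    (Sw : Finset ℕ) (hSw : IsTribRep Sw)
    (hw : ∑ i ∈ S, trib (i - 1) = ∑ i ∈ Sw, trib i) :
    ∑ i ∈ Sw, trib (i + 1) = (∑ i ∈ S, trib i) + 1 := by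
  obtain ⟨B, hBrep, hB1, hB2⟩ := exists_wall_rep S hS h3
  have heq : Sw = B :=
    trib_rep_unique Sw.card Sw B rfl hSw hBrep (by rw [← hw, hB1])
  rw [heq, hB2]
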